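/- arXiv:2106.02748 — 2 statements merged into one kernel-verified Lean document; each statement's English description precedes it below -/
import Mathlib

section
/- For step sizes α_c = c^{-ρ_α} and β_c = c^{-ρ_β} with 1/2 < ρ_α < ρ_β ≤ 1, and any M ∈ (0,1), define M_o = M^{-ρ_β/(ρ_β-ρ_α)} and let m be a positive integer with m ≥ 1/(ρ_β-ρ_α). Then for every λ ∈ (0,1) and every positive integer c ≥ M_o λ^{-m}, any positive integer ℓ ≤ c satisfying β_ℓ/α_c > λ must satisfy ℓ ≤ M·c. -/
theorem stmt0 (ρa ρb M M₀ : ℝ) (m : ℕ)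
    (hρa : 1/2 < ρa) (hab : ρa < ρb) (hb1 : ρb ≤ 1)
    (hM : M ∈ Set.Ioo (0:ℝ) 1)
    (hM₀ : M₀ = M ^ (-(ρb / (ρb - ρa))))
    (hm0 : 0 < m) (hm : 1 / (ρb - ρa) ≤ (m : ℝ))
    (lam : ℝ) (hlam : lam ∈ Set.Ioo (0:ℝ) 1)
    (c ℓ : ℕ) (hc : 0 < c) (hℓ : 0 < ℓ)
    (hcge : M₀ * lam ^ (-(m : ℝ)) ≤ (c : ℝ))
    (hℓc : ℓ ≤ c)
    (h : ((ℓ : ℝ) ^ (-ρb)) / ((c : ℝ) ^ (-ρa)) > lam) :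
    (ℓ : ℝ) ≤ M * c := by
  obtain ⟨hM0, hM1⟩ := hM
  obtain ⟨hl0, hl1⟩ := hlam
  by_contra hcon
  push_neg at hcon
  have hcR : (0:ℝ) < c := by exact_mod_cast hc
  have hℓR : (0:ℝ) < ℓ := by exact_mod_cast hℓ
  have hd0 : 0 < ρb - ρa := sub_pos.mpr hab
  have hb0 : 0 < ρb := by linarith
  -- rewrite h
  have heq : ((ℓ:ℝ) ^ (-ρb)) / ((c:ℝ) ^ (-ρa)) = ((c:ℝ)^ρa) / ((ℓ:ℝ)^ρb) := by
    rw [Real.rpow_neg hℓR.le, Real.rpow_neg hcR.le, inv_div_inv]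
  rw [heq] at h
  have h1 : lam * (ℓ:ℝ)^ρb < (c:ℝ)^ρa :=
    (lt_div_iff₀ (Real.rpow_pos_of_pos hℓR _)).mp h
  -- step 2
  have h2 : M^ρb * (c:ℝ)^ρb ≤ (ℓ:ℝ)^ρb := by
    have := Real.rpow_le_rpow (by positivity) hcon.le hb0.le
    rwa [Real.mul_rpow hM0.le hcR.le] at this
  have h3 : lam * (M^ρb * (c:ℝ)^ρb) < (c:ℝ)^ρa := by
    have := mul_le_mul_of_nonneg_left h2 hl0.le
    linarith
  -- lower bound on c^(ρb-ρa)
  have hmd : 1 ≤ (m:ℝ) * (ρb - ρa) := by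
    rw [div_le_iff₀ hd0] at hm; linarith
  have h4 : M^(-ρb) * lam⁻¹ ≤ (c:ℝ)^(ρb - ρa) := by
    have h5 : (M₀ * lam ^ (-(m:ℝ)))^(ρb-ρa) ≤ (c:ℝ)^(ρb-ρa) := by
      apply Real.rpow_le_rpow _ hcge hd0.le
      subst hM₀; positivity
    have hM₀pos : 0 < M₀ := by subst hM₀; positivity
    rw [Real.mul_rpow hM₀pos.le (by positivity), hM₀, ← Real.rpow_mul hM0.le,
        ← Real.rpow_mul hl0.le] at h5
    have e1 : -(ρb / (ρb - ρa)) * (ρb - ρa) = -ρb := by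
      field_simp
    rw [e1] at h5
    refine le_trans ?_ h5
    have e2 : lam⁻¹ = lam ^ (-1 : ℝ) := by
      rw [Real.rpow_neg_one]
    rw [e2]
    have : lam ^ (-1:ℝ) ≤ lam ^ (-(m:ℝ) * (ρb - ρa)) := by
      apply Real.rpow_le_rpow_of_exponent_ge hl0 hl1.le
      nlinarith
    nlinarith [Real.rpow_pos_of_pos hM0 (-ρb)]
  -- combine: c^ρa ≤ lam * M^ρb * c^ρb
  have hMb : 0 < M ^ ρb := Real.rpow_pos_of_pos hM0 _
  have h6 : (c:ℝ)^ρa ≤ lam * (M^ρb * (c:ℝ)^ρb) := by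
    have := mul_le_mul_of_nonneg_left h4 (by positivity : (0:ℝ) ≤ lam * M^ρb * (c:ℝ)^ρa)
    have key : lam * M^ρb * (c:ℝ)^ρa * (M^(-ρb) * lam⁻¹) = (c:ℝ)^ρa := by
      rw [Real.rpow_neg hM0.le]
      field_simp
    rw [key] at this
    calc (c:ℝ)^ρa ≤ lam * M^ρb * (c:ℝ)^ρa * (c:ℝ)^(ρb - ρa) := this
      _ = lam * (M^ρb * (c:ℝ)^ρb) := by
          rw [mul_assoc, ← Real.rpow_add hcR, mul_assoc]
          ring_nf
  linarith
end

section
/- Let H(t) = ‖q¹(t) - Q¹π²(t)‖² + ‖q²(t) - Q²π¹(t)‖² along solutions of the coupled flow dq^i/dt = Q^i B̄r^{-i}(q^{-i}(t),τ) - q^i(t), dπ^i/dt = B̄r^i(q^i(t),τ) - π^i(t). Then dH(t)/dt = -2H(t), so H(t) = H(0)e^{-2t} and H(t) → 0 as t → ∞. -/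
theorem stmt16 {A1 A2 : Type*} [Fintype A1] [Fintype A2]
    (Q1 : A1 → A2 → ℝ) (Q2 : A2 → A1 → ℝ) (τ : ℝ) (hτ : 0 < τ)
    (b1 : ℝ → A1 → ℝ) (b2 : ℝ → A2 → ℝ)
    (q1 : ℝ → A1 → ℝ) (q2 : ℝ → A2 → ℝ)
    (π1 : ℝ → A1 → ℝ) (π2 : ℝ → A2 → ℝ)
    (hb1 : ∀ t, b1 t ∈ stdSimplex ℝ A1) (hb2 : ∀ t, b2 t ∈ stdSimplex ℝ A2)
    (hπ1 : ∀ t, π1 t ∈ stdSimplex ℝ A1) (hπ2 : ∀ t, π2 t ∈ stdSimplex ℝ A2)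
    (hq1 : ∀ t a, HasDerivAt (fun t => q1 t a)
      ((∑ b, Q1 a b * b2 t b) - q1 t a) t)
    (hq2 : ∀ t b, HasDerivAt (fun t => q2 t b)
      ((∑ a, Q2 b a * b1 t a) - q2 t b) t)
    (hπ1' : ∀ t a, HasDerivAt (fun t => π1 t a) (b1 t a - π1 t a) t)
    (hπ2' : ∀ t b, HasDerivAt (fun t => π2 t b) (b2 t b - π2 t b) t)
    (H : ℝ → ℝ)
    (hH : ∀ t, H t = ∑ a, (q1 t a - ∑ b, Q1 a b * π2 t b) ^ 2
                   + ∑ b, (q2 t b - ∑ a, Q2 b a * π1 t a) ^ 2) :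
    (∀ t, HasDerivAt H (-2 * H t) t) ∧
    (∀ t, H t = H 0 * Real.exp (-2 * t)) ∧
    Filter.Tendsto H Filter.atTop (nhds 0) := by
  have hHfun : H = fun t => ∑ a, (q1 t a - ∑ b, Q1 a b * π2 t b) ^ 2
      + ∑ b, (q2 t b - ∑ a, Q2 b a * π1 t a) ^ 2 := funext hH
  -- derivative of each summand in the first sum
  have he1 : ∀ t a, HasDerivAt (fun t => (q1 t a - ∑ b, Q1 a b * π2 t b) ^ 2)
      (-2 * (q1 t a - ∑ b, Q1 a b * π2 t b) ^ 2) t := by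
    intro t a
    have hinner : HasDerivAt (fun t => ∑ b, Q1 a b * π2 t b)
        (∑ b, Q1 a b * (b2 t b - π2 t b)) t :=
      HasDerivAt.fun_sum fun b _ => (hπ2' t b).const_mul (Q1 a b)
    have hd : HasDerivAt (fun t => q1 t a - ∑ b, Q1 a b * π2 t b)
        (-(q1 t a - ∑ b, Q1 a b * π2 t b)) t := by
      have := (hq1 t a).sub hinner
      refine this.congr_deriv ?_
      simp only [mul_sub, Finset.sum_sub_distrib]
      ring
    have := hd.pow 2
    refine this.congr_deriv ?_
    ring
  have he2 : ∀ t b, HasDerivAt (fun t => (q2 t b - ∑ a, Q2 b a * π1 t a) ^ 2)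
      (-2 * (q2 t b - ∑ a, Q2 b a * π1 t a) ^ 2) t := by
    intro t b
    have hinner : HasDerivAt (fun t => ∑ a, Q2 b a * π1 t a)
        (∑ a, Q2 b a * (b1 t a - π1 t a)) t :=
      HasDerivAt.fun_sum fun a _ => (hπ1' t a).const_mul (Q2 b a)
    have hd : HasDerivAt (fun t => q2 t b - ∑ a, Q2 b a * π1 t a)
        (-(q2 t b - ∑ a, Q2 b a * π1 t a)) t := by
      have := (hq2 t b).sub hinner
      refine this.congr_deriv ?_
      simp only [mul_sub, Finset.sum_sub_distrib]
      ring
    have := hd.pow 2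
    refine this.congr_deriv ?_
    ring
  have hH' : ∀ t, HasDerivAt H (-2 * H t) t := by
    intro t
    rw [hHfun]
    have h1 : HasDerivAt (fun t => ∑ a, (q1 t a - ∑ b, Q1 a b * π2 t b) ^ 2)
        (∑ a, -2 * (q1 t a - ∑ b, Q1 a b * π2 t b) ^ 2) t :=
      HasDerivAt.fun_sum fun a _ => he1 t a
    have h2 : HasDerivAt (fun t => ∑ b, (q2 t b - ∑ a, Q2 b a * π1 t a) ^ 2)
        (∑ b, -2 * (q2 t b - ∑ a, Q2 b a * π1 t a) ^ 2) t :=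
      HasDerivAt.fun_sum fun b _ => he2 t b
    have := h1.add h2
    refine this.congr_deriv ?_
    simp only [← Finset.mul_sum]
    ring
  have hexp : ∀ t, H t = H 0 * Real.exp (-2 * t) := by
    have hg : ∀ t, HasDerivAt (fun t => H t * Real.exp (2 * t)) 0 t := by
      intro t
      have hE : HasDerivAt (fun t : ℝ => Real.exp (2 * t)) (2 * Real.exp (2 * t)) t := by
        have := (Real.hasDerivAt_exp (2 * t)).comp t ((hasDerivAt_id t).const_mul 2)
        refine this.congr_deriv ?_
        ring
      have := (hH' t).mul hE
      refine this.congr_deriv ?_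
      ring
    have hconst : ∀ t, H t * Real.exp (2 * t) = H 0 * Real.exp (2 * 0) := by
      intro t
      have hdiff : Differentiable ℝ (fun t => H t * Real.exp (2 * t)) :=
        fun t => (hg t).differentiableAt
      exact is_const_of_deriv_eq_zero hdiff (fun x => (hg x).deriv) t 0
    intro t
    have h := hconst t
    simp only [mul_zero, Real.exp_zero, mul_one] at h
    have : Real.exp (-2 * t) = (Real.exp (2 * t))⁻¹ := by
      rw [← Real.exp_neg]; ring_nf
    rw [this]
    field_simp
    linarith [h]
  refine ⟨hH', hexp, ?_⟩
  have htend : Filter.Tendsto (fun t : ℝ => Real.exp (-2 * t)) Filter.atTop (nhds 0) := by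
    apply Real.tendsto_exp_atBot.comp
    exact Filter.Tendsto.const_mul_atTop_of_neg (by norm_num) Filter.tendsto_id
  have : Filter.Tendsto (fun t => H 0 * Real.exp (-2 * t)) Filter.atTop (nhds (H 0 * 0)) :=
    htend.const_mul (H 0)
  rw [mul_zero] at this
  exact this.congr fun t => (hexp t).symm
end
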